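/- There exists a constant C > 0 such that for every ℓ ∈ (0, 2·arsinh(1)] and every holomorphic function f on the strip S = { z ∈ ℂ : |Re z| < X(ℓ) } with f(z+2πi) = f(z), the constant mean b₀(f) = (1/2π)∫₀^{2π} f(s+iθ) dθ satisfies |b₀(f)| ≤ C·ℓ^{3/2} · ( ∫_{−X(ℓ)}^{X(ℓ)} ∫₀^{2π} 4·|f(s+iθ)|² · ρ_ℓ(s)^{−2} dθ ds )^{1/2}. -/

import Mathlib

open Real MeasureTheory Complex

/-- Half-width (in the coordinate `s`) of the standard hyperbolic collar around a simple
closed geodesic of length `ℓ`. -/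
noncomputable def collarX (ℓ : ℝ) : ℝ :=
  (2 * Real.pi / ℓ) * (Real.pi / 2 - Real.arctan (Real.sinh (ℓ / 2)))

/-- Conformal factor of the standard hyperbolic collar metric `ρ_ℓ(s)²(ds² + dθ²)`. -/
noncomputable def collarRho (ℓ s : ℝ) : ℝ :=
  ℓ / (2 * Real.pi * Real.cos (ℓ * s / (2 * Real.pi)))

open scoped ENNReal NNReal
set_option maxHeartbeats 1000000

private lemma slice_const {X : ℝ} {f : ℂ → ℂ}
    (hf : DifferentiableOn ℂ f {z : ℂ | |z.re| < X})
    (hper : ∀ z ∈ {z : ℂ | |z.re| < X}, f (z + 2 * Real.pi * Complex.I) = f z)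
    {s t : ℝ} (hs : s ∈ Set.Ioo (-X) X) (ht : t ∈ Set.Ioo (-X) X) :
    (∫ θ in (0:ℝ)..(2*Real.pi), f ((t:ℂ) + θ * Complex.I)) =
      ∫ θ in (0:ℝ)..(2*Real.pi), f ((s:ℂ) + θ * Complex.I) := by
  have hsub : Set.uIcc s t ⊆ Set.Ioo (-X) X := Set.ordConnected_Ioo.uIcc_subset hs ht
  have hrect : (Set.uIcc ((s:ℂ)).re ((t:ℂ)+2*Real.pi*Complex.I).re ×ℂ
      Set.uIcc ((s:ℂ)).im ((t:ℂ)+2*Real.pi*Complex.I).im) ⊆ {z : ℂ | |z.re| < X} := by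
    intro z hz
    have h1 : z.re ∈ Set.uIcc s t := by
      have := hz.1
      simpa using this
    have := hsub h1
    simp only [Set.mem_setOf_eq, abs_lt]
    exact ⟨this.1, this.2⟩
  have H := Complex.integral_boundary_rect_eq_zero_of_differentiableOn f (s:ℂ)
      ((t:ℂ) + 2*Real.pi*Complex.I) (hf.mono hrect)
  simp only [Complex.add_re, Complex.add_im, Complex.ofReal_re, Complex.ofReal_im,
    Complex.mul_re, Complex.mul_im, Complex.I_re, Complex.I_im, Complex.ofReal_mul,
    mul_one, mul_zero, one_mul, zero_mul, Complex.re_ofNat, Complex.im_ofNat,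
    add_zero, zero_add, sub_zero, zero_sub, Complex.ofReal_zero, Complex.ofReal_ofNat, neg_neg] at H
  have hcancel : (∫ x in s..t, f ↑x) = ∫ x in s..t, f (↑x + (2:ℝ) * ↑π * Complex.I) := by
    refine intervalIntegral.integral_congr fun x hx => ?_
    have hx' : (x:ℂ) ∈ {z:ℂ | |z.re| < X} := by
      have := hsub hx
      simp only [Set.mem_setOf_eq, Complex.ofReal_re, abs_lt]
      exact ⟨this.1, this.2⟩
    have h2 := hper _ hx'
    have : ((2:ℝ) : ℂ) * ↑π * Complex.I = 2 * ↑π * Complex.I := by norm_num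
    rw [this, h2]
  rw [show ((2:ℝ):ℂ) = (2:ℂ) from by norm_num] at hcancel
  rw [← hcancel, sub_self, zero_add, sub_eq_zero] at H
  exact mul_left_cancel₀ Complex.I_ne_zero (by simpa [smul_eq_mul] using H)

private lemma slice_cs {g : ℝ → ℂ} (hg : Continuous g) :
    (‖∫ θ in (0:ℝ)..(2*Real.pi), g θ‖₊ : ℝ≥0∞) ^ 2 ≤
      ENNReal.ofReal (2*Real.pi) *
        ∫⁻ θ in Set.Ioo 0 (2*Real.pi), ENNReal.ofReal (‖g θ‖ ^ 2) := by
  have hπ := Real.pi_pos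
  set M := ∫⁻ θ in Set.Ioo 0 (2*Real.pi), ENNReal.ofReal (‖g θ‖ ^ 2) with hM
  have key : (‖∫ θ in (0:ℝ)..(2*Real.pi), g θ‖₊ : ℝ≥0∞) ≤
      M ^ ((1:ℝ)/2) * (ENNReal.ofReal (2*Real.pi)) ^ ((1:ℝ)/2) := by
    have step1 : (‖∫ θ in (0:ℝ)..(2*Real.pi), g θ‖₊ : ℝ≥0∞) ≤
        ∫⁻ θ in Set.Ioo 0 (2*Real.pi), (‖g θ‖₊ : ℝ≥0∞) := by
      rw [intervalIntegral.integral_of_le (by positivity)]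
      refine le_trans (enorm_integral_le_lintegral_enorm _) ?_
      exact (setLIntegral_congr Ioo_ae_eq_Ioc).ge
    have hmeas : Measurable fun θ => (‖g θ‖₊ : ℝ≥0∞) :=
      measurable_coe_nnreal_ennreal.comp hg.nnnorm.measurable
    have hconj : Real.HolderConjugate 2 2 := Real.HolderConjugate.two_two
    have H := ENNReal.lintegral_mul_le_Lp_mul_Lq
      (volume.restrict (Set.Ioo (0:ℝ) (2*Real.pi))) hconj hmeas.aemeasurable
      (aemeasurable_const (b := (1:ℝ≥0∞)))
    simp only [Pi.mul_apply, Pi.one_apply, mul_one, ENNReal.one_rpow] at H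
    refine le_trans step1 (le_trans H ?_)
    rw [lintegral_one, Measure.restrict_apply MeasurableSet.univ, Set.univ_inter,
      Real.volume_Ioo, sub_zero]
    have h1 : ∀ θ : ℝ, (‖g θ‖₊ : ℝ≥0∞) ^ (2:ℝ) = ENNReal.ofReal (‖g θ‖ ^ 2) := by
      intro θ
      rw [show (2:ℝ) = ((2:ℕ):ℝ) by norm_num, ENNReal.rpow_natCast,
        ENNReal.ofReal_pow (norm_nonneg _), ofReal_norm, enorm_eq_nnnorm]
    simp_rw [h1]
    rw [hM]
  calc (‖∫ θ in (0:ℝ)..(2*Real.pi), g θ‖₊ : ℝ≥0∞) ^ 2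
      ≤ (M ^ ((1:ℝ)/2) * (ENNReal.ofReal (2*Real.pi)) ^ ((1:ℝ)/2)) ^ 2 :=
        pow_le_pow_left₀ zero_le key 2
    _ = M * ENNReal.ofReal (2*Real.pi) := by
        rw [mul_pow, ← ENNReal.rpow_natCast (M ^ ((1:ℝ)/2)) 2,
          ← ENNReal.rpow_natCast ((ENNReal.ofReal (2*Real.pi)) ^ ((1:ℝ)/2)) 2,
          ← ENNReal.rpow_mul, ← ENNReal.rpow_mul]
        norm_num
    _ = ENNReal.ofReal (2*Real.pi) * M := mul_comm _ _

/-- There is a universal constant `C > 0` such that for every `ℓ ∈ (0, 2 arsinh 1]` and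
every holomorphic quadratic differential `f·dz²` on the standard collar (i.e. `f` holomorphic
and `2πi`-periodic on the strip `{|Re z| < X(ℓ)}`), the principal-part coefficient
`b₀(f) = (1/2π)∫₀^{2π} f(s+iθ) dθ` satisfies
`|b₀(f)| ≤ C ℓ^{3/2} · (∫∫ 4|f|² ρ_ℓ⁻² dθ ds)^{1/2} = C ℓ^{3/2} ‖f·dz²‖_{L²}`. -/
theorem principal_part_coefficient_bound :
    ∃ C : ℝ, 0 < C ∧ ∀ ℓ : ℝ, ℓ ∈ Set.Ioc 0 (2 * Real.arsinh 1) →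
      ∀ f : ℂ → ℂ, DifferentiableOn ℂ f {z : ℂ | |z.re| < collarX ℓ} →
        (∀ z ∈ {z : ℂ | |z.re| < collarX ℓ}, f (z + 2 * Real.pi * Complex.I) = f z) →
        ∀ s ∈ Set.Ioo (-collarX ℓ) (collarX ℓ),
          ENNReal.ofReal (‖(1 / (2 * Real.pi) : ℂ) *
              ∫ θ in (0 : ℝ)..(2 * Real.pi), f ((s : ℂ) + θ * Complex.I)‖) ≤
            ENNReal.ofReal (C * ℓ ^ ((3 : ℝ) / 2)) *
              (∫⁻ t in Set.Ioo (-collarX ℓ) (collarX ℓ), ∫⁻ θ in Set.Ioo 0 (2 * Real.pi),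
                ENNReal.ofReal (4 * ‖f ((t : ℂ) + θ * Complex.I)‖ ^ 2 *
                  (collarRho ℓ t ^ 2)⁻¹)) ^ ((1 : ℝ) / 2) := by
  refine ⟨1, one_pos, ?_⟩
  rintro ℓ ⟨hℓ0, hℓle⟩ f hf hper s hs
  have hπ := Real.pi_pos
  have hu₀pos : 0 < Real.pi/2 - Real.arctan (Real.sinh (ℓ/2)) :=
    sub_pos.mpr (Real.arctan_lt_pi_div_two _)
  have harct_nonneg : 0 ≤ Real.arctan (Real.sinh (ℓ/2)) := by
    rw [← Real.arctan_zero]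
    exact Real.arctan_strictMono.monotone (Real.sinh_nonneg_iff.mpr (by positivity))
  have hu₀le : Real.pi/2 - Real.arctan (Real.sinh (ℓ/2)) ≤ Real.pi/2 := by linarith
  have hu₀ge : Real.pi/4 ≤ Real.pi/2 - Real.arctan (Real.sinh (ℓ/2)) := by
    have h1 : Real.sinh (ℓ/2) ≤ 1 := by
      have h2 : ℓ/2 ≤ Real.arsinh 1 := by linarith
      calc Real.sinh (ℓ/2) ≤ Real.sinh (Real.arsinh 1) := Real.sinh_le_sinh.mpr h2
        _ = 1 := Real.sinh_arsinh 1
    have h3 : Real.arctan (Real.sinh (ℓ/2)) ≤ Real.pi/4 := by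
      rw [← Real.arctan_one]
      exact Real.arctan_strictMono.monotone h1
    linarith
  have hXeq : collarX ℓ = (2*Real.pi/ℓ) * (Real.pi/2 - Real.arctan (Real.sinh (ℓ/2))) := rfl
  have hXpos : 0 < collarX ℓ := by
    rw [hXeq]; exact mul_pos (by positivity) hu₀pos
  have hXge : Real.pi^2/(2*ℓ) ≤ collarX ℓ := by
    rw [hXeq]
    calc Real.pi^2/(2*ℓ) = (2*Real.pi/ℓ) * (Real.pi/4) := by field_simp; ring
      _ ≤ _ := by
        apply mul_le_mul_of_nonneg_left hu₀ge (by positivity)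
  have hℓX : ℓ * collarX ℓ = 2*Real.pi*(Real.pi/2 - Real.arctan (Real.sinh (ℓ/2))) := by
    rw [hXeq]; field_simp
  -- lower bound on the inverse square of the conformal factor
  have hρ : ∀ t ∈ Set.Ioo (-(collarX ℓ/2)) (collarX ℓ/2),
      2*Real.pi^2/ℓ^2 ≤ (collarRho ℓ t ^ 2)⁻¹ := by
    intro t ht
    have hu_abs : |ℓ*t/(2*Real.pi)| ≤ Real.pi/4 := by
      rw [abs_div, abs_mul, abs_of_pos hℓ0, abs_of_pos (by positivity : (0:ℝ) < 2*Real.pi),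
        div_le_iff₀ (by positivity)]
      have h1 : |t| ≤ collarX ℓ/2 := by
        rw [abs_le]; exact ⟨by linarith [ht.1], by linarith [ht.2]⟩
      calc ℓ*|t| ≤ ℓ*(collarX ℓ/2) := mul_le_mul_of_nonneg_left h1 hℓ0.le
        _ = (ℓ * collarX ℓ)/2 := by ring
        _ = Real.pi*(Real.pi/2 - Real.arctan (Real.sinh (ℓ/2))) := by rw [hℓX]; ring
        _ ≤ Real.pi*(Real.pi/2) := mul_le_mul_of_nonneg_left hu₀le hπ.le
        _ = Real.pi/4*(2*Real.pi) := by ring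
    have hcos : Real.sqrt 2/2 ≤ Real.cos (ℓ*t/(2*Real.pi)) := by
      rw [← Real.cos_abs, ← Real.cos_pi_div_four]
      exact Real.cos_le_cos_of_nonneg_of_le_pi (abs_nonneg _) (by linarith) hu_abs
    have hrhoinv : (collarRho ℓ t ^ 2)⁻¹ = (2*Real.pi*Real.cos (ℓ*t/(2*Real.pi)))^2/ℓ^2 := by
      rw [collarRho, div_pow, inv_div]
    rw [hrhoinv]
    have hc2 : (1:ℝ)/2 ≤ Real.cos (ℓ*t/(2*Real.pi))^2 := by
      calc (1:ℝ)/2 = (Real.sqrt 2/2)^2 := by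
            rw [div_pow, Real.sq_sqrt (by norm_num : (0:ℝ) ≤ 2)]; norm_num
        _ ≤ _ := pow_le_pow_left₀ (by positivity) hcos 2
    have h4 : 2*Real.pi^2 ≤ (2*Real.pi*Real.cos (ℓ*t/(2*Real.pi)))^2 := by nlinarith
    gcongr
  set A := (‖∫ θ in (0:ℝ)..(2*Real.pi), f ((s:ℂ) + θ * Complex.I)‖₊ : ℝ≥0∞) with hA
  -- slice lower bound on the θ-integral of |f|²
  have hMbound : ∀ t ∈ Set.Ioo (-collarX ℓ) (collarX ℓ),
      A^2 * (ENNReal.ofReal (2*Real.pi))⁻¹ ≤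
        ∫⁻ θ in Set.Ioo 0 (2*Real.pi),
          ENNReal.ofReal (‖f ((t:ℂ) + θ*Complex.I)‖ ^ 2) := by
    intro t ht
    have hmem : ∀ θ:ℝ, ((t:ℂ) + θ*Complex.I) ∈ {z : ℂ | |z.re| < collarX ℓ} := by
      intro θ
      simp only [Set.mem_setOf_eq, Complex.add_re, Complex.ofReal_re, Complex.mul_re,
        Complex.I_re, Complex.ofReal_im, Complex.I_im, mul_zero, mul_one, zero_mul, sub_zero,
        add_zero]
      exact abs_lt.mpr ⟨ht.1, ht.2⟩
    have hcont : Continuous fun θ:ℝ => f ((t:ℂ) + θ*Complex.I) :=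
      hf.continuousOn.comp_continuous (by continuity) hmem
    have hcs := slice_cs hcont
    rw [slice_const hf hper hs ht] at hcs
    have h2πne : (ENNReal.ofReal (2*Real.pi)) ≠ 0 := (ENNReal.ofReal_pos.mpr (by positivity)).ne'
    have h2πtop : (ENNReal.ofReal (2*Real.pi)) ≠ ⊤ := ENNReal.ofReal_ne_top
    calc A^2 * (ENNReal.ofReal (2*Real.pi))⁻¹
        ≤ (ENNReal.ofReal (2*Real.pi) *
            ∫⁻ θ in Set.Ioo 0 (2*Real.pi),
              ENNReal.ofReal (‖f ((t:ℂ) + θ*Complex.I)‖ ^ 2)) *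
            (ENNReal.ofReal (2*Real.pi))⁻¹ := mul_le_mul_left hcs _
      _ = _ := by
          rw [mul_comm (ENNReal.ofReal (2*Real.pi)), mul_assoc,
            ENNReal.mul_inv_cancel h2πne h2πtop, mul_one]
  have hinner : ∀ t : ℝ,
      (∫⁻ θ in Set.Ioo 0 (2*Real.pi),
          ENNReal.ofReal (4 * ‖f ((t:ℂ) + θ*Complex.I)‖ ^ 2 * (collarRho ℓ t ^2)⁻¹))
        = ENNReal.ofReal (4 * (collarRho ℓ t ^2)⁻¹) *
            ∫⁻ θ in Set.Ioo 0 (2*Real.pi),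
              ENNReal.ofReal (‖f ((t:ℂ)+θ*Complex.I)‖^2) := by
    intro t
    rw [← lintegral_const_mul' _ _ ENNReal.ofReal_ne_top]
    refine lintegral_congr fun θ => ?_
    rw [← ENNReal.ofReal_mul (by positivity)]
    congr 1
    ring
  have hsub2 : Set.Ioo (-(collarX ℓ/2)) (collarX ℓ/2) ⊆ Set.Ioo (-collarX ℓ) (collarX ℓ) :=
    Set.Ioo_subset_Ioo (by linarith) (by linarith)
  have hJ : ENNReal.ofReal (2*Real.pi^3/ℓ^3) * A^2 ≤
      ∫⁻ t in Set.Ioo (-collarX ℓ) (collarX ℓ), ∫⁻ θ in Set.Ioo 0 (2 * Real.pi),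
        ENNReal.ofReal (4 * ‖f ((t : ℂ) + θ * Complex.I)‖ ^ 2 *
          (collarRho ℓ t ^ 2)⁻¹) := by
    refine le_trans ?_ (lintegral_mono_set hsub2)
    have hptwise : ∀ t ∈ Set.Ioo (-(collarX ℓ/2)) (collarX ℓ/2),
        ENNReal.ofReal (8*Real.pi^2/ℓ^2) * (A^2 * (ENNReal.ofReal (2*Real.pi))⁻¹) ≤
          ∫⁻ θ in Set.Ioo 0 (2*Real.pi),
            ENNReal.ofReal (4 * ‖f ((t:ℂ)+θ*Complex.I)‖^2 * (collarRho ℓ t^2)⁻¹) := by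
      intro t ht
      rw [hinner t]
      have h1 : ENNReal.ofReal (8*Real.pi^2/ℓ^2) ≤ ENNReal.ofReal (4*(collarRho ℓ t^2)⁻¹) := by
        apply ENNReal.ofReal_le_ofReal
        have := hρ t ht
        calc 8*Real.pi^2/ℓ^2 = 4*(2*Real.pi^2/ℓ^2) := by ring
          _ ≤ 4*(collarRho ℓ t^2)⁻¹ := by linarith
      exact mul_le_mul' h1 (hMbound t (hsub2 ht))
    calc ENNReal.ofReal (2*Real.pi^3/ℓ^3) * A^2
        ≤ (ENNReal.ofReal (8*Real.pi^2/ℓ^2) * (A^2 * (ENNReal.ofReal (2*Real.pi))⁻¹)) *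
            volume (Set.Ioo (-(collarX ℓ/2)) (collarX ℓ/2)) := by
          rw [Real.volume_Ioo, show collarX ℓ/2 - -(collarX ℓ/2) = collarX ℓ by ring,
            ← ENNReal.ofReal_inv_of_pos (by positivity : (0:ℝ) < 2*Real.pi)]
          calc ENNReal.ofReal (2*Real.pi^3/ℓ^3) * A^2
              = A^2 * ENNReal.ofReal (8*Real.pi^2/ℓ^2 * (2*Real.pi)⁻¹ * (Real.pi^2/(2*ℓ))) := by
                rw [mul_comm]
                congr 2
                field_simp
                ring
            _ ≤ A^2 * ENNReal.ofReal (8*Real.pi^2/ℓ^2 * (2*Real.pi)⁻¹ * collarX ℓ) := by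
                refine mul_le_mul_right (ENNReal.ofReal_le_ofReal ?_) _
                have h0 : (0:ℝ) ≤ 8*Real.pi^2/ℓ^2 * (2*Real.pi)⁻¹ := by positivity
                exact mul_le_mul_of_nonneg_left hXge h0
            _ = _ := by
                rw [ENNReal.ofReal_mul (by positivity), ENNReal.ofReal_mul (by positivity)]
                ring
      _ = ∫⁻ _ in Set.Ioo (-(collarX ℓ/2)) (collarX ℓ/2),
            ENNReal.ofReal (8*Real.pi^2/ℓ^2) * (A^2 * (ENNReal.ofReal (2*Real.pi))⁻¹) :=
          (setLIntegral_const _ _).symm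
      _ ≤ _ := setLIntegral_mono' measurableSet_Ioo hptwise
  have hLHS : ENNReal.ofReal (‖(1/(2*Real.pi):ℂ) *
      ∫ θ in (0:ℝ)..(2*Real.pi), f ((s:ℂ)+θ*Complex.I)‖)
      = ENNReal.ofReal (1/(2*Real.pi)) * A := by
    rw [norm_mul, ENNReal.ofReal_mul (norm_nonneg _)]
    congr 1
    · congr 1
      rw [show ((1:ℂ)/(2*(Real.pi:ℂ))) = (((1/(2*Real.pi):ℝ)):ℂ) by push_cast; ring,
        Complex.norm_real, Real.norm_eq_abs, abs_of_pos (by positivity)]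
    · exact ofReal_norm _
  rw [hLHS, one_mul]
  have hJhalf : ENNReal.ofReal ((2*Real.pi^3/ℓ^3) ^ ((1:ℝ)/2)) * A ≤
      (∫⁻ t in Set.Ioo (-collarX ℓ) (collarX ℓ), ∫⁻ θ in Set.Ioo 0 (2 * Real.pi),
        ENNReal.ofReal (4 * ‖f ((t : ℂ) + θ * Complex.I)‖ ^ 2 *
          (collarRho ℓ t ^ 2)⁻¹)) ^ ((1:ℝ)/2) := by
    calc ENNReal.ofReal ((2*Real.pi^3/ℓ^3)^((1:ℝ)/2)) * A
        = (ENNReal.ofReal (2*Real.pi^3/ℓ^3) * A^2) ^ ((1:ℝ)/2) := by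
          rw [ENNReal.mul_rpow_of_nonneg _ _ (by norm_num),
            ← ENNReal.ofReal_rpow_of_pos (by positivity)]
          congr 1
          rw [← ENNReal.rpow_natCast A 2, ← ENNReal.rpow_mul]
          norm_num
      _ ≤ _ := ENNReal.rpow_le_rpow hJ (by norm_num)
  have hkey : 1/(2*Real.pi) ≤ ℓ^((3:ℝ)/2) * (2*Real.pi^3/ℓ^3)^((1:ℝ)/2) := by
    have h1 : (2*Real.pi^3/ℓ^3 : ℝ)^((1:ℝ)/2) = (2*Real.pi^3)^((1:ℝ)/2) / ℓ^((3:ℝ)/2) := by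
      rw [Real.div_rpow (by positivity) (by positivity)]
      congr 1
      rw [← Real.rpow_natCast ℓ 3, ← Real.rpow_mul hℓ0.le]
      norm_num
    have h2 : ℓ^((3:ℝ)/2) * ((2*Real.pi^3)^((1:ℝ)/2) / ℓ^((3:ℝ)/2)) = (2*Real.pi^3)^((1:ℝ)/2) := by
      have hne : ℓ^((3:ℝ)/2) ≠ 0 := by positivity
      field_simp
    rw [h1, h2]
    have h3 : (1:ℝ) ≤ (2*Real.pi^3)^((1:ℝ)/2) := by
      exact Real.one_le_rpow (by nlinarith [Real.pi_gt_three]) (by norm_num)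
    have h4 : 1/(2*Real.pi) ≤ 1 := by
      rw [div_le_one (by positivity)]
      nlinarith [Real.pi_gt_three]
    linarith
  calc ENNReal.ofReal (1/(2*Real.pi)) * A
      ≤ ENNReal.ofReal (ℓ^((3:ℝ)/2)) * (ENNReal.ofReal ((2*Real.pi^3/ℓ^3)^((1:ℝ)/2)) * A) := by
        rw [← mul_assoc, ← ENNReal.ofReal_mul (by positivity)]
        exact mul_le_mul_left (ENNReal.ofReal_le_ofReal hkey) A
    _ ≤ _ := mul_le_mul_right hJhalf _
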